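/- For every integer m ≥ 0, the map φ_{3+2m} on the 7-edge bipartite graph P₇ defined by a ↦ aG(aB)^m a, b ↦ bD(bC)^m b, c ↦ cF(cA)^m c, d ↦ aB(aB)^m a, e ↦ cB(aB)^m a, f ↦ aC(aB)^m a, g ↦ bE(bA)^m b induces an automorphism of the free group F₆ = π₁(P₇) (i.e., φ_{3+2m} is a homotopy equivalence). -/
import Mathlib

/-- `π₁(P₇, v₀)` is free of rank 6 on the loops `x_b = aB, x_c = aC, x_d = aD,
x_e = aE, x_f = aF, x_g = aG` (indexed `0,...,5`). The prototype map
`φ_{3+2m} : a ↦ aG(aB)^m a, b ↦ bD(bC)^m b, c ↦ cF(cA)^m c, d ↦ aB(aB)^m a,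
e ↦ cB(aB)^m a, f ↦ aC(aB)^m a, g ↦ bE(bA)^m b` fixes both vertices, and the
endomorphism it induces on `π₁(P₇) ≅ F₆` sends `x_y = φ(a)·φ(y)⁻¹`, computed
in the generators via `φ(a) = W_a·a`, `φ(b) = W_b·b`, `φ(c) = W_c·c`,
`φ(d) = W_d·a`, `φ(e) = W_e·a`, `φ(f) = W_f·a`, `φ(g) = W_g·b` with
`W_a = x_g x_b^m`, `W_b = x_b⁻¹ x_d (x_b⁻¹ x_c)^m`, `W_c = x_c⁻¹ x_f x_c⁻ᵐ`,
`W_d = x_b^{m+1}`, `W_e = x_c⁻¹ x_b^{m+1}`, `W_f = x_c x_b^m`,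
`W_g = x_b⁻¹ x_e x_b⁻ᵐ`. -/
def prototypeInduced (m : ℕ) : FreeGroup (Fin 6) →* FreeGroup (Fin 6) :=
  FreeGroup.lift
    (fun i : Fin 6 =>
      let x : Fin 6 → FreeGroup (Fin 6) := FreeGroup.of
      let Wa := x 5 * (x 0) ^ m
      let Wb := (x 0)⁻¹ * x 2 * ((x 0)⁻¹ * x 1) ^ m
      let Wc := (x 1)⁻¹ * x 4 * ((x 1)⁻¹) ^ m
      let Wd := (x 0) ^ (m + 1)
      let We := (x 1)⁻¹ * (x 0) ^ (m + 1)
      let Wf := x 1 * (x 0) ^ m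
      let Wg := (x 0)⁻¹ * x 3 * ((x 0)⁻¹) ^ m
      ![Wa * x 0 * Wb⁻¹,
        Wa * x 1 * Wc⁻¹,
        Wa * Wd⁻¹,
        Wa * We⁻¹,
        Wa * Wf⁻¹,
        Wa * x 0 * Wg⁻¹] i)

private def protoInv (m : ℕ) : FreeGroup (Fin 6) →* FreeGroup (Fin 6) :=
  FreeGroup.lift
    (fun i : Fin 6 =>
      let y : Fin 6 → FreeGroup (Fin 6) := FreeGroup.of
      let u := (y 2)⁻¹ * y 4 * (y 2)⁻¹ * y 3
      let t := (y 2)⁻¹ * y 3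
      ![u, t,
        u * (y 0)⁻¹ * y 2 * u ^ (m + 2) * ((u⁻¹ * t) ^ m)⁻¹,
        u * (y 5)⁻¹ * y 2 * u ^ (2 * m + 2),
        t * (y 1)⁻¹ * y 2 * u ^ (m + 1) * t ^ (m + 1),
        y 4 * (y 2)⁻¹ * y 3] i)

section helpers
variable (m : ℕ)
local notation "x" i => FreeGroup.of (i : Fin 6)

private lemma phi0 : prototypeInduced m (x 0) =
    (x 5) * (x 0) ^ m * (x 0) * (((x 0)⁻¹ * (x 2) * ((x 0)⁻¹ * (x 1)) ^ m)⁻¹) := by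
  simp only [prototypeInduced, FreeGroup.lift_apply_of]; rfl
private lemma phi1 : prototypeInduced m (x 1) =
    (x 5) * (x 0) ^ m * (x 1) * (((x 1)⁻¹ * (x 4) * ((x 1)⁻¹) ^ m)⁻¹) := by
  simp only [prototypeInduced, FreeGroup.lift_apply_of]; rfl
private lemma phi2 : prototypeInduced m (x 2) =
    (x 5) * (x 0) ^ m * ((x 0) ^ (m + 1))⁻¹ := by
  simp only [prototypeInduced, FreeGroup.lift_apply_of]; rfl
private lemma phi3 : prototypeInduced m (x 3) =
    (x 5) * (x 0) ^ m * (((x 1)⁻¹ * (x 0) ^ (m + 1))⁻¹) := by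
  simp only [prototypeInduced, FreeGroup.lift_apply_of]; rfl
private lemma phi4 : prototypeInduced m (x 4) =
    (x 5) * (x 0) ^ m * (((x 1) * (x 0) ^ m)⁻¹) := by
  simp only [prototypeInduced, FreeGroup.lift_apply_of]; rfl
private lemma phi5 : prototypeInduced m (x 5) =
    (x 5) * (x 0) ^ m * (x 0) * (((x 0)⁻¹ * (x 3) * ((x 0)⁻¹) ^ m)⁻¹) := by
  simp only [prototypeInduced, FreeGroup.lift_apply_of]; rfl

private lemma psi0 : protoInv m (x 0) = (x 2)⁻¹ * (x 4) * (x 2)⁻¹ * (x 3) := by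
  simp only [protoInv, FreeGroup.lift_apply_of]; rfl
private lemma psi1 : protoInv m (x 1) = (x 2)⁻¹ * (x 3) := by
  simp only [protoInv, FreeGroup.lift_apply_of]; rfl
private lemma psi2 : protoInv m (x 2) =
    ((x 2)⁻¹ * (x 4) * (x 2)⁻¹ * (x 3)) * (x 0)⁻¹ * (x 2) *
      ((x 2)⁻¹ * (x 4) * (x 2)⁻¹ * (x 3)) ^ (m + 2) *
      (((((x 2)⁻¹ * (x 4) * (x 2)⁻¹ * (x 3))⁻¹ * ((x 2)⁻¹ * (x 3))) ^ m)⁻¹) := by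
  simp only [protoInv, FreeGroup.lift_apply_of]; rfl
private lemma psi3 : protoInv m (x 3) =
    ((x 2)⁻¹ * (x 4) * (x 2)⁻¹ * (x 3)) * (x 5)⁻¹ * (x 2) *
      ((x 2)⁻¹ * (x 4) * (x 2)⁻¹ * (x 3)) ^ (2 * m + 2) := by
  simp only [protoInv, FreeGroup.lift_apply_of]; rfl
private lemma psi4 : protoInv m (x 4) =
    ((x 2)⁻¹ * (x 3)) * (x 1)⁻¹ * (x 2) *
      ((x 2)⁻¹ * (x 4) * (x 2)⁻¹ * (x 3)) ^ (m + 1) * ((x 2)⁻¹ * (x 3)) ^ (m + 1) := by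
  simp only [protoInv, FreeGroup.lift_apply_of]; rfl
private lemma psi5 : protoInv m (x 5) = (x 4) * (x 2)⁻¹ * (x 3) := by
  simp only [protoInv, FreeGroup.lift_apply_of]; rfl

set_option maxHeartbeats 1000000 in
private lemma pp0 : protoInv m (prototypeInduced m (x 0)) = (x 0) := by
  simp only [phi0, map_mul, map_inv, map_pow, psi0, psi1, psi2, psi3, psi4, psi5]
  rw [show (FreeGroup.of 4 * (FreeGroup.of (2:Fin 6))⁻¹ * FreeGroup.of 3 : FreeGroup (Fin 6)) =
      FreeGroup.of 2 * ((FreeGroup.of 2)⁻¹ * FreeGroup.of 4 * (FreeGroup.of 2)⁻¹ * FreeGroup.of 3) from by group]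
  generalize ((FreeGroup.of 2)⁻¹ * FreeGroup.of 4 * (FreeGroup.of (2:Fin 6))⁻¹ * FreeGroup.of 3 : FreeGroup (Fin 6)) = U
  generalize ((FreeGroup.of 2)⁻¹ * FreeGroup.of (3:Fin 6) : FreeGroup (Fin 6)) = T
  group
set_option maxHeartbeats 1000000 in
private lemma pp1 : protoInv m (prototypeInduced m (x 1)) = (x 1) := by
  simp only [phi1, map_mul, map_inv, map_pow, psi0, psi1, psi2, psi3, psi4, psi5]
  rw [show (FreeGroup.of 4 * (FreeGroup.of (2:Fin 6))⁻¹ * FreeGroup.of 3 : FreeGroup (Fin 6)) =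
      FreeGroup.of 2 * ((FreeGroup.of 2)⁻¹ * FreeGroup.of 4 * (FreeGroup.of 2)⁻¹ * FreeGroup.of 3) from by group]
  generalize ((FreeGroup.of 2)⁻¹ * FreeGroup.of 4 * (FreeGroup.of (2:Fin 6))⁻¹ * FreeGroup.of 3 : FreeGroup (Fin 6)) = U
  generalize ((FreeGroup.of 2)⁻¹ * FreeGroup.of (3:Fin 6) : FreeGroup (Fin 6)) = T
  group
set_option maxHeartbeats 1000000 in
private lemma pp2 : protoInv m (prototypeInduced m (x 2)) = (x 2) := by
  simp only [phi2, map_mul, map_inv, map_pow, psi0, psi1, psi2, psi3, psi4, psi5]; group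
set_option maxHeartbeats 1000000 in
private lemma pp3 : protoInv m (prototypeInduced m (x 3)) = (x 3) := by
  simp only [phi3, map_mul, map_inv, map_pow, psi0, psi1, psi2, psi3, psi4, psi5]; group
set_option maxHeartbeats 1000000 in
private lemma pp4 : protoInv m (prototypeInduced m (x 4)) = (x 4) := by
  simp only [phi4, map_mul, map_inv, map_pow, psi0, psi1, psi2, psi3, psi4, psi5]; group
set_option maxHeartbeats 1000000 in
private lemma pp5 : protoInv m (prototypeInduced m (x 5)) = (x 5) := by
  simp only [phi5, map_mul, map_inv, map_pow, psi0, psi1, psi2, psi3, psi4, psi5]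
  rw [show (FreeGroup.of 4 * (FreeGroup.of (2:Fin 6))⁻¹ * FreeGroup.of 3 : FreeGroup (Fin 6)) =
      FreeGroup.of 2 * ((FreeGroup.of 2)⁻¹ * FreeGroup.of 4 * (FreeGroup.of 2)⁻¹ * FreeGroup.of 3) from by group]
  generalize ((FreeGroup.of 2)⁻¹ * FreeGroup.of 4 * (FreeGroup.of (2:Fin 6))⁻¹ * FreeGroup.of 3 : FreeGroup (Fin 6)) = U
  generalize ((FreeGroup.of 2)⁻¹ * FreeGroup.of (3:Fin 6) : FreeGroup (Fin 6)) = T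
  group

set_option maxHeartbeats 1000000 in
private lemma qq0 : prototypeInduced m (protoInv m (x 0)) = (x 0) := by
  simp only [psi0, map_mul, map_inv, map_pow, phi0, phi1, phi2, phi3, phi4, phi5]; group
set_option maxHeartbeats 1000000 in
private lemma qq1 : prototypeInduced m (protoInv m (x 1)) = (x 1) := by
  simp only [psi1, map_mul, map_inv, map_pow, phi0, phi1, phi2, phi3, phi4, phi5]; group
set_option maxHeartbeats 1000000 in
private lemma qq2 : prototypeInduced m (protoInv m (x 2)) = (x 2) := by
  simp only [psi2, map_mul, map_inv, map_pow, phi0, phi1, phi2, phi3, phi4, phi5]; group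
set_option maxHeartbeats 1000000 in
private lemma qq3 : prototypeInduced m (protoInv m (x 3)) = (x 3) := by
  simp only [psi3, map_mul, map_inv, map_pow, phi0, phi1, phi2, phi3, phi4, phi5]; group
set_option maxHeartbeats 1000000 in
private lemma qq4 : prototypeInduced m (protoInv m (x 4)) = (x 4) := by
  simp only [psi4, map_mul, map_inv, map_pow, phi0, phi1, phi2, phi3, phi4, phi5]; group
set_option maxHeartbeats 1000000 in
private lemma qq5 : prototypeInduced m (protoInv m (x 5)) = (x 5) := by
  simp only [psi5, map_mul, map_inv, map_pow, phi0, phi1, phi2, phi3, phi4, phi5]; group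

private lemma psi_phi : (protoInv m).comp (prototypeInduced m) = MonoidHom.id _ := by
  apply FreeGroup.ext_hom
  intro i
  fin_cases i
  · exact pp0 m
  · exact pp1 m
  · exact pp2 m
  · exact pp3 m
  · exact pp4 m
  · exact pp5 m

private lemma phi_psi : (prototypeInduced m).comp (protoInv m) = MonoidHom.id _ := by
  apply FreeGroup.ext_hom
  intro i
  fin_cases i
  · exact qq0 m
  · exact qq1 m
  · exact qq2 m
  · exact qq3 m
  · exact qq4 m
  · exact qq5 m
end helpers

/-- For every `m ≥ 0`, the prototype map `φ_{3+2m}` is a homotopy equivalence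
of `P₇`: the induced endomorphism of `π₁(P₇) ≅ F₆` is an automorphism. -/
theorem prototype_induces_automorphism (m : ℕ) :
    Function.Bijective (prototypeInduced m) := by
  constructor
  · intro a b h
    have h1 := congrArg (protoInv m) h
    rw [← MonoidHom.comp_apply, ← MonoidHom.comp_apply, psi_phi] at h1
    simpa using h1
  · intro b
    refine ⟨protoInv m b, ?_⟩
    have := congrFun (congrArg (fun f : FreeGroup (Fin 6) →* FreeGroup (Fin 6) => ⇑f) (phi_psi m)) b
    simpa [MonoidHom.comp_apply] using this
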